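/- For θ ∈ (0, 2π/3) with θ ≠ π/2, the quantity 1/|sin 2θ|³ + 1/(sin²θ · sin 2θ) is strictly positive, and for θ ∈ (2π/3, π) it is strictly negative. -/
import Mathlib


open Real

lemma cos_two_pi_div_three' : Real.cos (2 * π / 3) = -(1/2) := by
  have h : 2 * π / 3 = π - π / 3 := by ring
  rw [h, Real.cos_pi_sub, Real.cos_pi_div_three]

lemma key_eq' (s t : ℝ) (hs : s ≠ 0) (ht : t ≠ 0) :
    1 / (-s) ^ 3 + 1 / (t ^ 2 * s) = (t ^ 2 - s ^ 2) / (t ^ 2 * (-s) ^ 3) := by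
  have hs' : (-s) ^ 3 ≠ 0 := pow_ne_zero 3 (neg_ne_zero.mpr hs)
  have hts : t ^ 2 * s ≠ 0 := mul_ne_zero (pow_ne_zero 2 ht) hs
  rw [div_add_div _ _ hs' hts, div_eq_div_iff (mul_ne_zero hs' hts)
    (mul_ne_zero (pow_ne_zero 2 ht) hs')]
  ring

lemma sin_two_neg' {θ : ℝ} (h1 : π / 2 < θ) (h2 : θ < π) : Real.sin (2 * θ) < 0 := by
  have hpos : 0 < Real.sin (2 * θ - π) :=
    Real.sin_pos_of_pos_of_lt_pi (by linarith) (by linarith)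
  have := Real.sin_pi_sub (π - 2 * θ)
  rw [Real.sin_sub_pi] at hpos
  linarith

/-- The quantity 1/|sin 2θ|³ + 1/(sin²θ·sin 2θ) is strictly positive for
θ ∈ (0,2π/3)\{π/2} and strictly negative for θ ∈ (2π/3,π). -/
theorem stmt_18 :
    (∀ θ : ℝ, θ ∈ Set.Ioo 0 (2 * π / 3) → θ ≠ π / 2 →
      0 < 1 / |sin (2 * θ)| ^ 3 + 1 / (sin θ ^ 2 * sin (2 * θ))) ∧
    (∀ θ : ℝ, θ ∈ Set.Ioo (2 * π / 3) π →
      1 / |sin (2 * θ)| ^ 3 + 1 / (sin θ ^ 2 * sin (2 * θ)) < 0) := by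
  have hpi := Real.pi_pos
  constructor
  · rintro θ ⟨h0, h1⟩ hne
    have hθπ : θ < π := by linarith
    have hs : 0 < sin θ := Real.sin_pos_of_pos_of_lt_pi h0 hθπ
    rcases lt_or_gt_of_ne hne with hlt | hgt
    · have hs2 : 0 < sin (2 * θ) := Real.sin_pos_of_pos_of_lt_pi (by linarith) (by linarith)
      have e1 : 0 < 1 / |sin (2 * θ)| ^ 3 := by
        rw [abs_of_pos hs2]; positivity
      have e2 : 0 < 1 / (sin θ ^ 2 * sin (2 * θ)) := by positivity
      linarith
    · have hs2 : sin (2 * θ) < 0 := sin_two_neg' hgt hθπ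
      have hc1 : cos θ < 0 := Real.cos_neg_of_pi_div_two_lt_of_lt hgt (by linarith)
      have hc2 : -(1/2) < cos θ := by
        have := Real.cos_lt_cos_of_nonneg_of_le_pi (le_of_lt h0) (by linarith) h1
        rwa [cos_two_pi_div_three'] at this
      have habs : |sin (2 * θ)| = -sin (2 * θ) := abs_of_neg hs2
      rw [habs]
      have hne2 : sin (2 * θ) ≠ 0 := ne_of_lt hs2
      have hsne : sin θ ≠ 0 := ne_of_gt hs
      have key : 1 / (-sin (2 * θ)) ^ 3 + 1 / (sin θ ^ 2 * sin (2 * θ)) =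
          (sin θ ^ 2 - sin (2 * θ) ^ 2) / (sin θ ^ 2 * (-sin (2 * θ)) ^ 3) :=
        key_eq' _ _ hne2 hsne
      rw [key]
      apply div_pos
      · have h2m := Real.sin_two_mul θ
        have h4 : cos θ ^ 2 < 1/4 := by nlinarith
        nlinarith [mul_pos (mul_pos hs hs) (show (0:ℝ) < 1 - 4 * cos θ ^ 2 by nlinarith)]
      · have : 0 < -sin (2 * θ) := by linarith
        positivity
  · rintro θ ⟨h1, h2⟩
    have hs : 0 < sin θ := Real.sin_pos_of_pos_of_lt_pi (by linarith) h2
    have hs2 : sin (2 * θ) < 0 := sin_two_neg' (by linarith) h2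
    have hc2 : cos θ < -(1/2) := by
      have := Real.cos_lt_cos_of_nonneg_of_le_pi (by linarith) (le_of_lt h2) h1
      rwa [cos_two_pi_div_three'] at this
    have habs : |sin (2 * θ)| = -sin (2 * θ) := abs_of_neg hs2
    rw [habs]
    have hne2 : sin (2 * θ) ≠ 0 := ne_of_lt hs2
    have hsne : sin θ ≠ 0 := ne_of_gt hs
    have key : 1 / (-sin (2 * θ)) ^ 3 + 1 / (sin θ ^ 2 * sin (2 * θ)) =
        (sin θ ^ 2 - sin (2 * θ) ^ 2) / (sin θ ^ 2 * (-sin (2 * θ)) ^ 3) :=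
      key_eq' _ _ hne2 hsne
    rw [key]
    apply div_neg_of_neg_of_pos
    · have h2m := Real.sin_two_mul θ
      have h4 : 1/4 < cos θ ^ 2 := by nlinarith
      nlinarith [mul_pos (mul_pos hs hs) (show (0:ℝ) < 4 * cos θ ^ 2 - 1 by nlinarith)]
    · have : 0 < -sin (2 * θ) := by linarith
      positivity
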